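/- Let μ be a distribution over ℓ-element subsets of [n] representing the query distribution of a non-adaptive relaxed decoder D(i) with soundness error ε and decoding radius δ for a code C, where some two codewords C(x), C(y) with x_i ≠ y_i exist. If G ⊆ supp(μ) is a family of query sets with μ(G) > ε, then the union of the sets in G has cardinality greater than δ·n. -/
import Mathlib


/-- for a non-adaptive relaxed decoder D(i) = f_I(w|_I), I ~ μ, with
perfect completeness, soundness error ε and decoding radius δ, any family G of query
sets with μ(G) > ε must cover more than δ·n coordinates. -/
theorem heavy_family_covers_much
    (k n ℓ : ℕ) (i : Fin k) (δ ε : ℝ)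
    (C : (Fin k → Bool) → (Fin n → Bool))
    (F : Finset (Finset (Fin n)))
    (hsz : ∀ I ∈ F, I.card = ℓ)
    (μ : Finset (Fin n) → ℝ)
    (hμ0 : ∀ I, 0 ≤ μ I)
    (hμ1 : ∑ I ∈ F, μ I = 1)
    (f : Finset (Fin n) → (Fin n → Bool) → Option Bool)
    (hlocal : ∀ (I : Finset (Fin n)) (w w' : Fin n → Bool),
      (∀ j ∈ I, w j = w' j) → f I w = f I w')
    (hcomplete : ∀ x : Fin k → Bool, ∀ I ∈ F, f I (C x) = some (x i))
    (hsound : ∀ (w : Fin n → Bool) (x : Fin k → Bool),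
      ((Finset.univ.filter (fun j : Fin n => w j ≠ C x j)).card : ℝ) ≤ δ * n →
      1 - ε ≤ ∑ I ∈ F.filter (fun I => f I w = some (x i) ∨ f I w = none), μ I)
    (G : Finset (Finset (Fin n))) (hG : G ⊆ F)
    (hGheavy : ε < ∑ I ∈ G, μ I) :
    δ * n < ((G.biUnion id).card : ℝ) := by
  by_contra hle
  push_neg at hle
  set U := G.biUnion id with hU
  set x : Fin k → Bool := fun _ => true with hx
  set y : Fin k → Bool := fun _ => false with hy
  set w : Fin n → Bool := fun j => if j ∈ U then C x j else C y j with hw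
  -- w is δ-close to C y
  have hclose : ((Finset.univ.filter (fun j : Fin n => w j ≠ C y j)).card : ℝ) ≤ δ * n := by
    refine le_trans ?_ hle
    have hsub : (Finset.univ.filter (fun j : Fin n => w j ≠ C y j)) ⊆ U := by
      intro j hj
      simp only [Finset.mem_filter] at hj
      by_contra hjU
      exact hj.2 (by simp [hw, hjU])
    exact_mod_cast Finset.card_le_card hsub
  have hs := hsound w y hclose
  -- on each I ∈ G, f I w = some true
  have hGval : ∀ I ∈ G, f I w = some true := by
    intro I hI
    have : f I w = f I (C x) := by
      apply hlocal
      intro j hj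
      have : j ∈ U := Finset.mem_biUnion.mpr ⟨I, hI, hj⟩
      simp [hw, this]
    rw [this, hcomplete x I (hG hI)]
  -- the soundness filter set is contained in F \ G
  have hsub2 : F.filter (fun I => f I w = some (y i) ∨ f I w = none) ⊆ F \ G := by
    intro I hI
    simp only [Finset.mem_filter] at hI
    refine Finset.mem_sdiff.mpr ⟨hI.1, fun hIG => ?_⟩
    have := hGval I hIG
    rcases hI.2 with h | h <;> simp [this, hy] at h
  have hsum2 : ∑ I ∈ F.filter (fun I => f I w = some (y i) ∨ f I w = none), μ I
      ≤ ∑ I ∈ F \ G, μ I :=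
    Finset.sum_le_sum_of_subset_of_nonneg hsub2 (fun I _ _ => hμ0 I)
  have hsdiff : ∑ I ∈ F \ G, μ I = 1 - ∑ I ∈ G, μ I := by
    rw [Finset.sum_sdiff_eq_sub hG, hμ1]
  linarith
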